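/- Let Γ be a simplicial graph with vertex set Λ, let M be the right-angled Coxeter matrix with m_{s,t} = 2 when s and t are adjacent in Γ and m_{s,t} = ∞ otherwise, and let A_M be the corresponding right-angled Artin group with Artin monoid A_M^+. Then the canonical monoid homomorphism identifies A_M^+ with the positive cone of A_M (the submonoid of A_M generated by Λ), and the pair (A_M, A_M^+) is a quasi-lattice ordered group. -/

import Mathlib

section Order

variable {H : Type*} [Group H]

/-- `x ≤ y` in the left-invariant partial order determined by the cone `P`. -/
def lle (P : Submonoid H) (x y : H) : Prop := x⁻¹ * y ∈ P

/-- `x ≤ᵣ y` in the right-invariant partial order determined by the cone `P`. -/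
def rle (P : Submonoid H) (x y : H) : Prop := y * x⁻¹ ∈ P

/-- `x` and `y` have a common upper bound for the left-invariant order. -/
def HasUB (P : Submonoid H) (x y : H) : Prop := ∃ z, lle P x z ∧ lle P y z

/-- `m` is a least upper bound of `x` and `y` for the left-invariant order. -/
def IsLub' (P : Submonoid H) (x y m : H) : Prop :=
  lle P x m ∧ lle P y m ∧ ∀ w, lle P x w → lle P y w → lle P m w

/-- `w` is a greatest lower bound of `u` and `v` for the right-invariant order
(greatest among *all* common right lower bounds in the group). -/
def IsRGlb (P : Submonoid H) (u v w : H) : Prop :=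
  rle P w u ∧ rle P w v ∧ ∀ z, rle P z u → rle P z v → rle P z w

/-- `(H,P)` is a partially ordered group: `P ∩ P⁻¹ = {1}`. -/
def IsPoGroup (P : Submonoid H) : Prop := ∀ x : H, x ∈ P → x⁻¹ ∈ P → x = 1

/-- `(H,P)` is a quasi-lattice ordered group: it is a partially ordered group in which
every pair of elements with a common upper bound has a least upper bound. -/
def IsQLO (P : Submonoid H) : Prop :=
  IsPoGroup P ∧ ∀ x y : H, HasUB P x y → ∃ m, IsLub' P x y m

end Order

variable {Λ : Type*}

/-- The defining relators of the right-angled Artin group attached to the graph `adj`: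
commutators of the generators at adjacent vertices. -/
def RaagRels (adj : Λ → Λ → Prop) : Set (FreeGroup Λ) :=
  {r | ∃ s t : Λ, adj s t ∧
    r = FreeGroup.of s * FreeGroup.of t * (FreeGroup.of s)⁻¹ * (FreeGroup.of t)⁻¹}

/-- The right-angled Artin group `A_M` of the right-angled Coxeter matrix with
`m_{s,t} = 2` iff `adj s t` (and `∞` otherwise): the group generated by `Λ` subject only
to the relations `st = ts` for `s`, `t` adjacent. -/
def RaagGroup (adj : Λ → Λ → Prop) : Type _ := PresentedGroup (RaagRels adj)

instance (adj : Λ → Λ → Prop) : Group (RaagGroup adj) :=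
  inferInstanceAs (Group (PresentedGroup _))

/-- The right-angled Artin monoid `A_M^+`: the monoid with the same presentation, taken
in the category of monoids. -/
def RaagMonoid (adj : Λ → Λ → Prop) : Type _ :=
  (conGen fun m n : FreeMonoid Λ => ∃ s t : Λ, adj s t ∧
    m = FreeMonoid.of s * FreeMonoid.of t ∧ n = FreeMonoid.of t * FreeMonoid.of s).Quotient

instance (adj : Λ → Λ → Prop) : Monoid (RaagMonoid adj) :=
  inferInstanceAs (Monoid (Con.Quotient _))

/-- In the right-angled Artin group, the generators at adjacent vertices commute. -/
lemma raag_of_comm (adj : Λ → Λ → Prop) {s t : Λ} (h : adj s t) :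
    (PresentedGroup.of s : RaagGroup adj) * PresentedGroup.of t =
      PresentedGroup.of t * PresentedGroup.of s := by
  have h1 : ((FreeGroup.of s * FreeGroup.of t * (FreeGroup.of s)⁻¹ * (FreeGroup.of t)⁻¹ :
      FreeGroup Λ) : FreeGroup Λ ⧸ Subgroup.normalClosure (RaagRels adj)) = 1 :=
    (QuotientGroup.eq_one_iff _).2 (Subgroup.subset_normalClosure ⟨s, t, h, rfl⟩)
  have h2 : (PresentedGroup.of s : RaagGroup adj) * PresentedGroup.of t *
      (PresentedGroup.of s)⁻¹ * (PresentedGroup.of t)⁻¹ = 1 := by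
    first
    | exact h1
    | simpa only [QuotientGroup.mk_mul, QuotientGroup.mk_inv] using h1
  calc (PresentedGroup.of s : RaagGroup adj) * PresentedGroup.of t
      = ((PresentedGroup.of s : RaagGroup adj) * PresentedGroup.of t *
          (PresentedGroup.of s)⁻¹ * (PresentedGroup.of t)⁻¹) *
          (PresentedGroup.of t * PresentedGroup.of s) := by group
    _ = PresentedGroup.of t * PresentedGroup.of s := by rw [h2]; group

/-- The canonical monoid homomorphism from the right-angled Artin monoid `A_M^+` to the
right-angled Artin group `A_M`, sending each generator to the corresponding generator. -/
def raagCanonical (adj : Λ → Λ → Prop) : RaagMonoid adj →* RaagGroup adj :=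
  Con.lift _ ((FreeMonoid.lift fun s : Λ => (PresentedGroup.of s : RaagGroup adj)))
    (Con.conGen_le.2 (by
      rintro m n ⟨s, t, h, rfl, rfl⟩
      rw [Con.ker_rel]
      simp only [map_mul, FreeMonoid.lift_eval_of]
      exact raag_of_comm adj h))

open Relation

namespace RaagAux
variable {Λ : Type*}

abbrev W (Λ : Type*) := List (Λ × Bool)

def cinv (x : Λ × Bool) : Λ × Bool := (x.1, !x.2)

@[simp] lemma cinv_cinv (x : Λ × Bool) : cinv (cinv x) = x := by
  cases x with | mk s e => cases e <;> rfl

@[simp] lemma cinv_fst (x : Λ × Bool) : (cinv x).1 = x.1 := rfl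

@[simp] lemma cinv_snd (x : Λ × Bool) : (cinv x).2 = !x.2 := rfl

variable (adj : Λ → Λ → Prop)

inductive WSwap : W Λ → W Λ → Prop
  | mk (u v : W Λ) (x y : Λ × Bool) (h : adj x.1 y.1) :
      WSwap (u ++ x :: y :: v) (u ++ y :: x :: v)

def WEq : W Λ → W Λ → Prop := EqvGen (WSwap adj)

variable {adj}

lemma WEq.refl (w : W Λ) : WEq adj w w := EqvGen.refl w

lemma WEq.symm {w w' : W Λ} (h : WEq adj w w') : WEq adj w' w := EqvGen.symm _ _ h

lemma WEq.trans {w₁ w₂ w₃ : W Λ} (h : WEq adj w₁ w₂) (h' : WEq adj w₂ w₃) :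
    WEq adj w₁ w₃ := EqvGen.trans _ _ _ h h'

lemma WSwap.weq {w w' : W Λ} (h : WSwap adj w w') : WEq adj w w' := EqvGen.rel _ _ h

lemma WSwap.perm {w w' : W Λ} (h : WSwap adj w w') : w.Perm w' := by
  rcases h with ⟨u, v, x, y, h⟩
  exact (List.Perm.append_left u (List.Perm.swap y x v))

lemma WEq.perm {w w' : W Λ} (h : WEq adj w w') : w.Perm w' := by
  induction h with
  | rel _ _ h => exact h.perm
  | refl => exact List.Perm.refl _
  | symm _ _ _ ih => exact ih.symm
  | trans _ _ _ _ _ ih₁ ih₂ => exact ih₁.trans ih₂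

lemma WSwap.append_left {w w' : W Λ} (h : WSwap adj w w') (l : W Λ) :
    WSwap adj (l ++ w) (l ++ w') := by
  rcases h with ⟨u, v, x, y, h⟩
  simpa [List.append_assoc] using WSwap.mk (adj := adj) (l ++ u) v x y h

lemma WSwap.append_right {w w' : W Λ} (h : WSwap adj w w') (l : W Λ) :
    WSwap adj (w ++ l) (w' ++ l) := by
  rcases h with ⟨u, v, x, y, h⟩
  simpa [List.append_assoc] using WSwap.mk (adj := adj) u (v ++ l) x y h

lemma WEq.append_left {w w' : W Λ} (h : WEq adj w w') (l : W Λ) :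
    WEq adj (l ++ w) (l ++ w') := by
  induction h with
  | rel _ _ h => exact (h.append_left l).weq
  | refl => exact WEq.refl _
  | symm _ _ _ ih => exact ih.symm
  | trans _ _ _ _ _ ih₁ ih₂ => exact ih₁.trans ih₂

lemma WEq.append_right {w w' : W Λ} (h : WEq adj w w') (l : W Λ) :
    WEq adj (w ++ l) (w' ++ l) := by
  induction h with
  | rel _ _ h => exact (h.append_right l).weq
  | refl => exact WEq.refl _
  | symm _ _ _ ih => exact ih.symm
  | trans _ _ _ _ _ ih₁ ih₂ => exact ih₁.trans ih₂

lemma WEq.append {w₁ w₂ v₁ v₂ : W Λ} (h : WEq adj w₁ w₂) (h' : WEq adj v₁ v₂) :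
    WEq adj (w₁ ++ v₁) (w₂ ++ v₂) :=
  (h.append_right v₁).trans (h'.append_left w₂)

lemma WEq.cons (x : Λ × Bool) {w w' : W Λ} (h : WEq adj w w') :
    WEq adj (x :: w) (x :: w') := h.append_left [x]

/-- Bring a letter commuting with everything before it to the front. -/
lemma weq_front (hsymm : Symmetric adj) {u : W Λ} {x : Λ × Bool}
    (h : ∀ b ∈ u, adj x.1 b.1) (v : W Λ) :
    WEq adj (u ++ x :: v) (x :: (u ++ v)) := by
  induction u with
  | nil => exact WEq.refl _
  | cons b u ih =>
    have h1 : WEq adj (u ++ x :: v) (x :: (u ++ v)) := ih fun c hc => h c (by simp [hc])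
    have h2 : WEq adj (b :: (u ++ x :: v)) (b :: x :: (u ++ v)) := h1.cons b
    have h3 : WSwap adj ([] ++ b :: x :: (u ++ v)) ([] ++ x :: b :: (u ++ v)) :=
      WSwap.mk [] (u ++ v) b x (hsymm (h b (by simp)))
    simpa using h2.trans h3.weq

lemma WSwap.reverse (hsymm : Symmetric adj) {w w' : W Λ} (h : WSwap adj w w') :
    WSwap adj w.reverse w'.reverse := by
  rcases h with ⟨u, v, x, y, h⟩
  simpa [List.reverse_append] using WSwap.mk (adj := adj) v.reverse u.reverse y x (hsymm h)

lemma WEq.reverse (hsymm : Symmetric adj) {w w' : W Λ} (h : WEq adj w w') :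
    WEq adj w.reverse w'.reverse := by
  induction h with
  | rel _ _ h => exact (h.reverse hsymm).weq
  | refl => exact WEq.refl _
  | symm _ _ _ ih => exact ih.symm
  | trans _ _ _ _ _ ih₁ ih₂ => exact ih₁.trans ih₂

def sflip (x : Λ × Bool) : Λ × Bool := cinv x

lemma WEq.mapFlip {w w' : W Λ} (h : WEq adj w w') :
    WEq adj (w.map cinv) (w'.map cinv) := by
  induction h with
  | rel _ _ h =>
    rcases h with ⟨u, v, x, y, hxy⟩
    simpa using (WSwap.mk (adj := adj) (u.map cinv) (v.map cinv) (cinv x) (cinv y)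
      (by simpa)).weq
  | refl => exact WEq.refl _
  | symm _ _ _ ih => exact ih.symm
  | trans _ _ _ _ _ ih₁ ih₂ => exact ih₁.trans ih₂



attribute [local instance] Classical.propDecidable

noncomputable def prj (α β : Λ × Bool) : W Λ → W Λ
  | [] => []
  | z :: w => if z = α ∨ z = β then z :: prj α β w else prj α β w

@[simp] lemma prj_nil (α β : Λ × Bool) : prj α β ([] : W Λ) = [] := rfl

lemma prj_cons (α β z : Λ × Bool) (w : W Λ) :
    prj α β (z :: w) = if z = α ∨ z = β then z :: prj α β w else prj α β w := rfl

lemma prj_cons_pos {α β z : Λ × Bool} (h : z = α ∨ z = β) (w : W Λ) :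
    prj α β (z :: w) = z :: prj α β w := by rw [prj_cons, if_pos h]

lemma prj_cons_neg {α β z : Λ × Bool} (h : ¬ (z = α ∨ z = β)) (w : W Λ) :
    prj α β (z :: w) = prj α β w := by rw [prj_cons, if_neg h]

lemma prj_append (α β : Λ × Bool) (u v : W Λ) :
    prj α β (u ++ v) = prj α β u ++ prj α β v := by
  induction u with
  | nil => simp
  | cons z u ih =>
    by_cases h : z = α ∨ z = β
    · simp [prj_cons_pos h, ih]
    · simp [prj_cons_neg h, ih]

lemma mem_prj {α β x : Λ × Bool} {w : W Λ} :
    x ∈ prj α β w ↔ x ∈ w ∧ (x = α ∨ x = β) := by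
  induction w with
  | nil => simp
  | cons z w ih =>
    by_cases h : z = α ∨ z = β
    · rw [prj_cons_pos h]
      constructor
      · intro hx
        rcases List.mem_cons.1 hx with rfl | hx
        · exact ⟨List.mem_cons_self, h⟩
        · exact ⟨List.mem_cons_of_mem _ (ih.1 hx).1, (ih.1 hx).2⟩
      · rintro ⟨hx, hx2⟩
        rcases List.mem_cons.1 hx with rfl | hx
        · exact List.mem_cons_self
        · exact List.mem_cons_of_mem _ (ih.2 ⟨hx, hx2⟩)
    · rw [prj_cons_neg h]
      constructor
      · intro hx
        exact ⟨List.mem_cons_of_mem _ (ih.1 hx).1, (ih.1 hx).2⟩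
      · rintro ⟨hx, hx2⟩
        rcases List.mem_cons.1 hx with rfl | hx
        · exact absurd hx2 h
        · exact ih.2 ⟨hx, hx2⟩

/-- Soundness: trace equivalence preserves projections to non-commuting pairs. -/
lemma WEq.prj_eq (hsymm : Symmetric adj) (hirr : ∀ s : Λ, ¬ adj s s)
    {α β : Λ × Bool} (hab : ¬ adj α.1 β.1) {w w' : W Λ}
    (h : WEq adj w w') : prj α β w = prj α β w' := by
  induction h with
  | rel _ _ h =>
    rcases h with ⟨u, v, x, y, hxy⟩
    rw [prj_append, prj_append]
    congr 1
    have hkey : ¬ (x = α ∨ x = β) ∨ ¬ (y = α ∨ y = β) := by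
      by_contra hc
      push_neg at hc
      rcases hc.1 with rfl | rfl <;> rcases hc.2 with rfl | rfl
      · exact hirr _ hxy
      · exact hab hxy
      · exact hab (hsymm hxy)
      · exact hirr _ hxy
    rcases hkey with hk | hk
    · rw [prj_cons_neg hk]
      by_cases hy : y = α ∨ y = β
      · rw [prj_cons_pos hy, prj_cons_pos hy, prj_cons_neg hk]
      · rw [prj_cons_neg hy, prj_cons_neg hy, prj_cons_neg hk]
    · rw [prj_cons_neg hk]
      by_cases hx : x = α ∨ x = β
      · rw [prj_cons_pos hx, prj_cons_neg hk, prj_cons_pos hx]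
      · rw [prj_cons_neg hx, prj_cons_neg hk, prj_cons_neg hx]
  | refl => rfl
  | symm _ _ _ ih => exact ih.symm
  | trans _ _ _ _ _ ih₁ ih₂ => exact ih₁.trans ih₂

lemma exists_first {α : Type*} {a : α} {l : List α} (h : a ∈ l) :
    ∃ u v, l = u ++ a :: v ∧ a ∉ u := by
  induction l with
  | nil => simp at h
  | cons b l ih =>
    by_cases hb : a = b
    · exact ⟨[], l, by simp [hb], by simp⟩
    · rcases List.mem_cons.1 h with rfl | h
      · exact absurd rfl hb
      · obtain ⟨u, v, rfl, hu⟩ := ih h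
        exact ⟨b :: u, v, rfl, by simp [hu, hb]⟩

/-- If every projection of `W` onto a pair `{a, β}` with `β` not commuting with `a`
starts with `a`, then all letters before the (first) occurrence of `a` in `W`
commute with `a`. -/
lemma before_first_comm (hirr : ∀ s : Λ, ¬ adj s s) {w₁ w₂ : W Λ} {a : Λ × Bool}
    (ha : a ∉ w₁)
    (hd : ∀ β : Λ × Bool, ¬ adj a.1 β.1 → ∃ t, prj a β (w₁ ++ a :: w₂) = a :: t) :
    ∀ b ∈ w₁, adj a.1 b.1 := by
  intro b hb
  by_contra hnb
  obtain ⟨t, ht⟩ := hd b hnb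
  have hne : b ≠ a := fun h => ha (h ▸ hb)
  have hbmem : b ∈ prj a b w₁ := mem_prj.2 ⟨hb, Or.inr rfl⟩
  obtain ⟨x, t', hxt⟩ := List.exists_cons_of_ne_nil (List.ne_nil_of_mem hbmem)
  have hx : x = b := by
    have hxm : x ∈ prj a b w₁ := by rw [hxt]; exact List.mem_cons_self
    rcases (mem_prj.1 hxm).2 with rfl | rfl
    · exact absurd (mem_prj.1 hxm).1 ha
    · rfl
  rw [prj_append, hxt, prj_cons_pos (Or.inl rfl)] at ht
  simp only [hx, List.cons_append] at ht
  exact hne (by injection ht)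

/-- Completeness of the projection criterion. -/
theorem weq_of_prj (hsymm : Symmetric adj) (hirr : ∀ s : Λ, ¬ adj s s) :
    ∀ {w w' : W Λ},
      (∀ α β : Λ × Bool, ¬ adj α.1 β.1 → prj α β w = prj α β w') → WEq adj w w' := by
  intro w
  induction w with
  | nil =>
    intro w' h
    have : w' = [] := by
      rcases hw' : w' with _ | ⟨z, w''⟩
      · rfl
      · exfalso
        have h0 := h z z (hirr _)
        rw [hw', prj_cons_pos (Or.inl rfl)] at h0
        simp at h0
    rw [this]
    exact WEq.refl _
  | cons a u ih =>
    intro w' h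
    have hmem : a ∈ w' := by
      have h0 := h a a (hirr _)
      rw [prj_cons_pos (Or.inl rfl)] at h0
      have : a ∈ prj a a w' := by rw [← h0]; exact List.mem_cons_self
      exact (mem_prj.1 this).1
    obtain ⟨w₁, w₂, rfl, ha⟩ := exists_first hmem
    have hcomm : ∀ b ∈ w₁, adj a.1 b.1 := by
      refine before_first_comm hirr (w₂ := w₂) ha (fun β hβ => ?_)
      refine ⟨prj a β u, ?_⟩
      rw [← h a β hβ, prj_cons_pos (Or.inl rfl)]
    have hfront : WEq adj (w₁ ++ a :: w₂) (a :: (w₁ ++ w₂)) := weq_front hsymm hcomm w₂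
    have hIH : WEq adj u (w₁ ++ w₂) := by
      refine ih (fun α β hab => ?_)
      have h1 : prj α β (a :: u) = prj α β (a :: (w₁ ++ w₂)) :=
        (h α β hab).trans (hfront.prj_eq hsymm hirr hab)
      by_cases hz : a = α ∨ a = β
      · rw [prj_cons_pos hz, prj_cons_pos hz] at h1
        injection h1
      · rwa [prj_cons_neg hz, prj_cons_neg hz] at h1
    exact ((hIH.cons a).trans hfront.symm)

/-- Left cancellation for trace equivalence. -/
lemma weq_cons_cancel (hsymm : Symmetric adj) (hirr : ∀ s : Λ, ¬ adj s s)
    {x : Λ × Bool} {u v : W Λ} (h : WEq adj (x :: u) (x :: v)) : WEq adj u v := by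
  refine weq_of_prj hsymm hirr (fun α β hab => ?_)
  have h1 := h.prj_eq hsymm hirr hab
  by_cases hz : x = α ∨ x = β
  · rw [prj_cons_pos hz, prj_cons_pos hz] at h1
    injection h1
  · rwa [prj_cons_neg hz, prj_cons_neg hz] at h1

/-- `x` is a left divisor of the trace of `w`. -/
def Ldiv (adj : Λ → Λ → Prop) (x : Λ × Bool) (w : W Λ) : Prop := ∃ w', WEq adj w (x :: w')

/-- `x` is a right divisor of the trace of `w`. -/
def Rdiv (adj : Λ → Λ → Prop) (x : Λ × Bool) (w : W Λ) : Prop := ∃ w', WEq adj w (w' ++ [x])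

lemma weq_singleton {x : Λ × Bool} {w : W Λ} (h : WEq adj w [x]) : w = [x] :=
  List.perm_singleton.1 h.perm

lemma ldiv_singleton {x y : Λ × Bool} (h : Ldiv adj y [x]) : y = x := by
  obtain ⟨w', hw⟩ := h
  have := weq_singleton (adj := adj) hw.symm
  exact (List.cons_eq_cons.1 this).1

lemma ldiv_of_weq {x : Λ × Bool} {w w' : W Λ} (h : WEq adj w w') (hd : Ldiv adj x w') :
    Ldiv adj x w := by
  obtain ⟨t, ht⟩ := hd
  exact ⟨t, h.trans ht⟩

/-- Concrete characterisation of left divisibility by a letter. -/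
lemma ldiv_iff (hsymm : Symmetric adj) (hirr : ∀ s : Λ, ¬ adj s s)
    {x : Λ × Bool} {w : W Λ} :
    Ldiv adj x w ↔ ∃ w₁ w₂, w = w₁ ++ x :: w₂ ∧ ∀ b ∈ w₁, adj x.1 b.1 := by
  constructor
  · rintro ⟨w', hw⟩
    have hmem : x ∈ w := hw.perm.symm.subset (List.mem_cons_self)
    obtain ⟨w₁, w₂, rfl, ha⟩ := exists_first hmem
    refine ⟨w₁, w₂, rfl, before_first_comm hirr (w₂ := w₂) ha (fun β hβ => ?_)⟩
    refine ⟨prj x β w', ?_⟩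
    rw [hw.prj_eq hsymm hirr hβ, prj_cons_pos (Or.inl rfl)]
  · rintro ⟨w₁, w₂, rfl, hc⟩
    exact ⟨w₁ ++ w₂, weq_front hsymm hc w₂⟩

/-- Division of a concatenation by a letter. -/
lemma ldiv_append (hsymm : Symmetric adj) (hirr : ∀ s : Λ, ¬ adj s s)
    {x : Λ × Bool} {t u : W Λ} (h : Ldiv adj x (t ++ u)) :
    Ldiv adj x t ∨ (Ldiv adj x u ∧ ∀ b ∈ t, adj x.1 b.1) := by
  obtain ⟨w₁, w₂, heq, hc⟩ := (ldiv_iff hsymm hirr).1 h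
  rcases List.append_eq_append_iff.1 heq.symm with ⟨a', rfl, ha'⟩ | ⟨c', rfl, hc'⟩
  · rcases a' with _ | ⟨z, a''⟩
    · right
      refine ⟨(ldiv_iff hsymm hirr).2 ⟨[], w₂, by simpa using ha'.symm, by simp⟩, ?_⟩
      intro b hb
      exact hc b (by simpa using hb)
    · have hz : x = z := by injection ha'
      left
      exact (ldiv_iff hsymm hirr).2 ⟨w₁, a'', by rw [hz], hc⟩
  · right
    constructor
    · exact (ldiv_iff hsymm hirr).2 ⟨c', w₂, hc', fun b hb => hc b (by simp [hb])⟩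
    · intro b hb
      exact hc b (by simp [hb])

lemma rdiv_iff_reverse (hsymm : Symmetric adj) {x : Λ × Bool} {w : W Λ} :
    Rdiv adj x w ↔ Ldiv adj x w.reverse := by
  constructor
  · rintro ⟨w', hw⟩
    exact ⟨w'.reverse, by simpa using hw.reverse hsymm⟩
  · rintro ⟨w', hw⟩
    refine ⟨w'.reverse, ?_⟩
    have := hw.reverse hsymm
    simpa using this

lemma rdiv_append (hsymm : Symmetric adj) (hirr : ∀ s : Λ, ¬ adj s s)
    {x : Λ × Bool} {t u : W Λ} (h : Rdiv adj x (t ++ u)) :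
    Rdiv adj x u ∨ (Rdiv adj x t ∧ ∀ b ∈ u, adj x.1 b.1) := by
  rw [rdiv_iff_reverse hsymm] at h
  rw [List.reverse_append] at h
  rcases ldiv_append hsymm hirr h with h1 | ⟨h1, h2⟩
  · left
    rwa [rdiv_iff_reverse hsymm]
  · right
    refine ⟨by rwa [rdiv_iff_reverse hsymm], fun b hb => h2 b (by simpa using hb)⟩

/-- Levi's lemma for trace monoids. -/
theorem levi (hsymm : Symmetric adj) (hirr : ∀ s : Λ, ¬ adj s s) :
    ∀ (v : W Λ) {t u w : W Λ}, WEq adj (t ++ u) (v ++ w) →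
      ∃ z₁ z₂ z₃ z₄ : W Λ, WEq adj t (z₁ ++ z₂) ∧ WEq adj u (z₃ ++ z₄) ∧
        WEq adj v (z₁ ++ z₃) ∧ WEq adj w (z₂ ++ z₄) ∧
        ∀ p ∈ z₂, ∀ q ∈ z₃, adj p.1 q.1 := by
  intro v
  induction v with
  | nil =>
    intro t u w h
    exact ⟨[], t, [], u, WEq.refl _, WEq.refl _, WEq.refl _, (by simpa using h.symm),
      by simp⟩
  | cons c v' ih =>
    intro t u w h
    have hld : Ldiv adj c (t ++ u) := ⟨v' ++ w, by simpa using h⟩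
    rcases ldiv_append hsymm hirr hld with ⟨t', ht⟩ | ⟨⟨u', hu⟩, hct⟩
    · have h2 : WEq adj (c :: (t' ++ u)) (c :: (v' ++ w)) :=
        ((ht.append_right u).symm.trans h)
      have h3 := weq_cons_cancel hsymm hirr h2
      obtain ⟨z₁, z₂, z₃, z₄, H1, H2, H3, H4, H5⟩ := ih h3
      exact ⟨c :: z₁, z₂, z₃, z₄, ht.trans (H1.cons c), H2, H3.cons c, H4, H5⟩
    · have hfront : WEq adj (t ++ c :: u') (c :: (t ++ u')) :=
        weq_front hsymm (fun b hb => hct b hb) u'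
      have h2 : WEq adj (c :: (t ++ u')) (c :: (v' ++ w)) :=
        hfront.symm.trans ((hu.append_left t).symm.trans h)
      have h3 := weq_cons_cancel hsymm hirr h2
      obtain ⟨z₁, z₂, z₃, z₄, H1, H2, H3, H4, H5⟩ := ih h3
      have hcz₁ : ∀ b ∈ z₁, adj c.1 b.1 :=
        fun b hb => hct b (H1.perm.symm.subset (List.mem_append.2 (Or.inl hb)))
      refine ⟨z₁, z₂, c :: z₃, z₄, H1, hu.trans (H2.cons c), ?_, H4, ?_⟩
      · have hf2 : WEq adj (z₁ ++ c :: z₃) (c :: (z₁ ++ z₃)) := weq_front hsymm hcz₁ z₃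
        exact (H3.cons c).trans hf2.symm
      · intro p hp q hq
        rcases List.mem_cons.1 hq with rfl | hq
        · exact hsymm (hct p (H1.perm.symm.subset (List.mem_append.2 (Or.inr hp))))
        · exact H5 p hp q hq

/-- A word is irreducible if its trace contains no factor `x · x⁻¹`. -/
def Irred (adj : Λ → Λ → Prop) (w : W Λ) : Prop :=
  ¬ ∃ (u : W Λ) (x : Λ × Bool) (v : W Λ), WEq adj w (u ++ x :: cinv x :: v)

lemma irred_nil : Irred adj ([] : W Λ) := by
  rintro ⟨u, x, v, h⟩
  have := h.perm.length_eq
  simp at this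

lemma Irred.weq {w w' : W Λ} (h : WEq adj w w') (hi : Irred adj w) : Irred adj w' := by
  rintro ⟨u, x, v, h'⟩
  exact hi ⟨u, x, v, h.trans h'⟩

lemma Irred.of_cons {x : Λ × Bool} {w : W Λ} (h : Irred adj (x :: w)) : Irred adj w := by
  rintro ⟨u, y, v, h'⟩
  exact h ⟨x :: u, y, v, by simpa using h'.cons x⟩

lemma Irred.not_ldiv {x : Λ × Bool} {w : W Λ} (h : Irred adj (x :: w)) :
    ¬ Ldiv adj (cinv x) w := by
  rintro ⟨w', hw⟩
  exact h ⟨[], x, w', by simpa using hw.cons x⟩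

lemma irred_cons (hsymm : Symmetric adj) (hirr : ∀ s : Λ, ¬ adj s s)
    {x : Λ × Bool} {w : W Λ} (hw : Irred adj w) (hld : ¬ Ldiv adj (cinv x) w) :
    Irred adj (x :: w) := by
  rintro ⟨u, y, v, h⟩
  have h' : WEq adj ([x] ++ w) ((u ++ [y]) ++ (cinv y :: v)) := by
    simpa [List.append_assoc] using h
  obtain ⟨z₁, z₂, z₃, z₄, H1, H2, H3, H4, H5⟩ := levi hsymm hirr (u ++ [y]) h'
  have hsing : z₁ ++ z₂ = [x] := List.perm_singleton.1 H1.perm.symm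
  rcases z₁ with _ | ⟨a, z₁'⟩
  · -- z₁ = [], z₂ = [x]
    simp only [List.nil_append] at hsing H3
    subst hsing
    have hdiv : Ldiv adj (cinv y) ([x] ++ z₄) := ⟨v, by simpa using H4.symm⟩
    rcases ldiv_append hsymm hirr hdiv with h1 | ⟨⟨z₄', hz₄⟩, _⟩
    · have hyx : cinv y = x := ldiv_singleton (adj := adj) h1
      have hy : y ∈ z₃ := H3.perm.subset (List.mem_append.2 (Or.inr (List.mem_cons_self)))
      have := H5 x (List.mem_cons_self) y hy
      rw [← hyx] at this
      simp at this
      exact hirr _ this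
    · refine hw ⟨u, y, z₄', ?_⟩
      have hb : WEq adj (z₃ ++ z₄) ((u ++ [y]) ++ (cinv y :: z₄')) :=
        WEq.append H3.symm hz₄
      simpa [List.append_assoc] using H2.trans hb
  · -- z₁ = [a, ...]: forces z₁ = [x], z₂ = []
    have ha : x = a ∧ z₁' = [] ∧ z₂ = [] := by
      rcases List.cons_eq_cons.1 hsing with ⟨h1, h2⟩
      exact ⟨h1.symm, List.append_eq_nil_iff.1 h2 |>.1, List.append_eq_nil_iff.1 h2 |>.2⟩
    obtain ⟨rfl, rfl, rfl⟩ := ha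
    simp only [List.append_nil] at H1 H3 H4
    have hrd : Rdiv adj y ([x] ++ z₃) := ⟨u, by simpa using H3.symm⟩
    rcases rdiv_append hsymm hirr hrd with ⟨z₃', hz₃⟩ | ⟨h1, hcomm⟩
    · refine hw ⟨z₃', y, v, ?_⟩
      have : WEq adj w ((z₃' ++ [y]) ++ z₄) := H2.trans (hz₃.append_right z₄)
      have h4 : WEq adj ((z₃' ++ [y]) ++ z₄) ((z₃' ++ [y]) ++ (cinv y :: v)) :=
        (by simpa using H4 : WEq adj (cinv y :: v) z₄).symm.append_left _
      have := this.trans h4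
      simpa [List.append_assoc] using this
    · have hyx : y = x := by
        obtain ⟨t', ht'⟩ := h1
        have := List.perm_singleton.1 ht'.perm.symm
        rcases t' with _ | ⟨b, t''⟩
        · exact (List.cons_eq_cons.1 this).1
        · exfalso
          have := congrArg List.length this
          simp at this
      subst hyx
      refine hld ⟨z₃ ++ v, ?_⟩
      have h4 : WEq adj z₄ (cinv y :: v) := by simpa using H4.symm
      have hcomm' : ∀ b ∈ z₃, adj (cinv y).1 b.1 := by
        intro b hb
        simpa using hcomm b hb
      have : WEq adj w (z₃ ++ cinv y :: v) := H2.trans (h4.append_left z₃)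
      exact this.trans (weq_front hsymm hcomm' v)

variable (adj) in
/-- Irreducible words. -/
def IrredW := {w : W Λ // Irred adj w}

variable (adj) in
instance wSetoid : Setoid (IrredW adj) :=
  ⟨fun w w' => WEq adj w.1 w'.1,
    ⟨fun _ => WEq.refl _, fun h => h.symm, fun h h' => h.trans h'⟩⟩

variable (adj) in
/-- The set of reduced traces. -/
def QW := Quotient (wSetoid adj)

lemma qw_sound {w w' : IrredW adj} (h : WEq adj w.1 w'.1) :
    (⟦w⟧ : QW adj) = ⟦w'⟧ := Quotient.sound h

lemma qw_exact {w w' : IrredW adj} (h : (⟦w⟧ : QW adj) = ⟦w'⟧) :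
    WEq adj w.1 w'.1 := Quotient.exact h

variable (hsymm : Symmetric adj) (hirr : ∀ s : Λ, ¬ adj s s)
include hsymm hirr

/-- The action of a letter on reduced traces: cancel if possible, otherwise prepend. -/
noncomputable def actF (x : Λ × Bool) (w : IrredW adj) : QW adj :=
  if h : ∃ w', WEq adj w.1 (cinv x :: w') then
    ⟦⟨Classical.choose h,
      ((w.2.weq (Classical.choose_spec h)).of_cons)⟩⟧
  else ⟦⟨x :: w.1, irred_cons hsymm hirr w.2 h⟩⟧

noncomputable def act (x : Λ × Bool) : QW adj → QW adj :=
  Quotient.lift (actF hsymm hirr x) (by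
    rintro ⟨a, ha⟩ ⟨b, hb⟩ h
    change WEq adj a b at h
    by_cases hd : ∃ w', WEq adj a (cinv x :: w')
    · have hd' : ∃ w', WEq adj b (cinv x :: w') :=
        ⟨Classical.choose hd, h.symm.trans (Classical.choose_spec hd)⟩
      rw [show actF hsymm hirr x ⟨a, ha⟩ = _ from dif_pos hd,
        show actF hsymm hirr x ⟨b, hb⟩ = _ from dif_pos hd']
      refine qw_sound ?_
      refine weq_cons_cancel hsymm hirr (x := cinv x) ?_
      exact (Classical.choose_spec hd).symm.trans (h.trans (Classical.choose_spec hd'))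
    · have hd' : ¬ ∃ w', WEq adj b (cinv x :: w') := by
        rintro ⟨w', hw'⟩
        exact hd ⟨w', h.trans hw'⟩
      rw [show actF hsymm hirr x ⟨a, ha⟩ = _ from dif_neg hd,
        show actF hsymm hirr x ⟨b, hb⟩ = _ from dif_neg hd']
      exact qw_sound (h.cons x))

lemma act_cancel {x : Λ × Bool} {w w' : W Λ} (hw : Irred adj w)
    (h : WEq adj w (cinv x :: w')) (hw' : Irred adj w') :
    act hsymm hirr x ⟦⟨w, hw⟩⟧ = (⟦⟨w', hw'⟩⟧ : QW adj) := by
  have hd : ∃ t, WEq adj w (cinv x :: t) := ⟨w', h⟩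
  show actF hsymm hirr x ⟨w, hw⟩ = _
  refine (dif_pos hd).trans ?_
  refine qw_sound (weq_cons_cancel hsymm hirr (x := cinv x) ?_)
  exact (Classical.choose_spec hd).symm.trans h

lemma act_cons {x : Λ × Bool} {w : W Λ} (hw : Irred adj w) (h : ¬ Ldiv adj (cinv x) w) :
    act hsymm hirr x ⟦⟨w, hw⟩⟧ = (⟦⟨x :: w, irred_cons hsymm hirr hw h⟩⟧ : QW adj) := by
  have h' : ¬ ∃ w', WEq adj w (cinv x :: w') := h
  show actF hsymm hirr x ⟨w, hw⟩ = _
  exact dif_neg h'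

lemma act_act_cinv (x : Λ × Bool) (q : QW adj) :
    act hsymm hirr x (act hsymm hirr (cinv x) q) = q := by
  refine Quotient.inductionOn q ?_
  rintro ⟨w, hw⟩
  by_cases hd : Ldiv adj x w
  · obtain ⟨w', hw'⟩ := hd
    have hiw' : Irred adj w' := (hw.weq hw').of_cons
    have h1 : act hsymm hirr (cinv x) ⟦⟨w, hw⟩⟧ = (⟦⟨w', hiw'⟩⟧ : QW adj) :=
      act_cancel hsymm hirr hw (by simpa using hw') hiw'
    rw [h1]
    have h2 : ¬ Ldiv adj (cinv x) w' := by
      rintro ⟨t, ht⟩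
      exact hw ⟨[], x, t, by simpa using hw'.trans (ht.cons x)⟩
    rw [act_cons hsymm hirr hiw' h2]
    exact qw_sound (by simpa using hw'.symm)
  · have hd' : ¬ Ldiv adj (cinv (cinv x)) w := by simpa using hd
    rw [act_cons hsymm hirr hw hd']
    have h2 : WEq adj (cinv x :: w) (cinv x :: w) := WEq.refl _
    exact act_cancel hsymm hirr _ h2 hw

/-- The permutation of reduced traces induced by a letter. -/
noncomputable def actPerm (x : Λ × Bool) : Equiv.Perm (QW adj) where
  toFun := act hsymm hirr x
  invFun := act hsymm hirr (cinv x)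
  left_inv := by
    intro q
    have := act_act_cinv hsymm hirr (cinv x) (q := q)
    simpa using this
  right_inv := fun q => act_act_cinv hsymm hirr x q

lemma ldiv_cons_iff_of_adj {z y : Λ × Bool} {w : W Λ} (hzy : adj z.1 y.1) :
    Ldiv adj z (y :: w) ↔ Ldiv adj z w := by
  constructor
  · intro h
    rcases ldiv_append hsymm hirr (t := [y]) (u := w) h with h1 | ⟨h1, _⟩
    · have := ldiv_singleton (adj := adj) h1
      subst this
      exact absurd hzy (hirr _)
    · exact h1
  · rintro ⟨t, ht⟩
    refine ⟨y :: t, ?_⟩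
    have h1 : WEq adj (y :: w) (y :: z :: t) := ht.cons y
    have h2 : WSwap adj ([] ++ y :: z :: t) ([] ++ z :: y :: t) :=
      WSwap.mk [] t y z (hsymm hzy)
    exact h1.trans (by simpa using h2.weq)

lemma act_comm_of_adj {x y : Λ × Bool} (hxy : adj x.1 y.1) (q : QW adj) :
    act hsymm hirr x (act hsymm hirr y q) = act hsymm hirr y (act hsymm hirr x q) := by
  have hne : x.1 ≠ y.1 := fun h => hirr _ (h ▸ hxy)
  have hxy' : adj (cinv x).1 (cinv y).1 := by simpa using hxy
  refine Quotient.inductionOn q ?_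
  rintro ⟨w, hw⟩
  by_cases hX : Ldiv adj (cinv x) w <;> by_cases hY : Ldiv adj (cinv y) w
  · -- both cancel
    obtain ⟨w₁, hw₁⟩ := hX
    obtain ⟨w₂, hw₂⟩ := hY
    have hi₁ : Irred adj w₁ := (hw.weq hw₁).of_cons
    have hi₂ : Irred adj w₂ := (hw.weq hw₂).of_cons
    have hY₁ : Ldiv adj (cinv y) w₁ :=
      (ldiv_cons_iff_of_adj hsymm hirr (by simpa using hsymm hxy)).1
        (ldiv_of_weq hw₁.symm ⟨w₂, hw₂⟩)
    have hX₂ : Ldiv adj (cinv x) w₂ :=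
      (ldiv_cons_iff_of_adj hsymm hirr (by simpa using hxy)).1
        (ldiv_of_weq hw₂.symm ⟨w₁, hw₁⟩)
    obtain ⟨m, hm⟩ := hY₁
    obtain ⟨m', hm'⟩ := hX₂
    have him : Irred adj m := (hi₁.weq hm).of_cons
    have him' : Irred adj m' := (hi₂.weq hm').of_cons
    rw [act_cancel hsymm hirr hw hw₁ hi₁, act_cancel hsymm hirr hw hw₂ hi₂,
      act_cancel hsymm hirr hi₁ hm him, act_cancel hsymm hirr hi₂ hm' him']
    refine qw_sound ?_
    have h1 : WEq adj w (cinv x :: cinv y :: m) := hw₁.trans (hm.cons _)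
    have h2 : WEq adj w (cinv y :: cinv x :: m') := hw₂.trans (hm'.cons _)
    have h3 : WSwap adj ([] ++ cinv y :: cinv x :: m') ([] ++ cinv x :: cinv y :: m') :=
      WSwap.mk [] m' (cinv y) (cinv x) (by simpa using hsymm hxy)
    have h4 : WEq adj (cinv x :: cinv y :: m) (cinv x :: cinv y :: m') :=
      h1.symm.trans (h2.trans (by simpa using h3.weq))
    exact weq_cons_cancel hsymm hirr (weq_cons_cancel hsymm hirr h4.symm)
  · -- x cancels, y prepends
    obtain ⟨w₁, hw₁⟩ := hX
    have hi₁ : Irred adj w₁ := (hw.weq hw₁).of_cons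
    have hY₁ : ¬ Ldiv adj (cinv y) w₁ := by
      intro h
      exact hY ((ldiv_cons_iff_of_adj hsymm hirr (by simpa using hsymm hxy)).2 h
        |> ldiv_of_weq hw₁)
    rw [act_cancel hsymm hirr hw hw₁ hi₁, act_cons hsymm hirr hi₁ hY₁,
      act_cons hsymm hirr hw hY]
    have hiyw : Irred adj (y :: w) := irred_cons hsymm hirr hw hY
    have hchain : WEq adj (y :: w) (cinv x :: y :: w₁) := by
      have h1 : WEq adj (y :: w) (y :: cinv x :: w₁) := hw₁.cons y
      have h2 : WSwap adj ([] ++ y :: cinv x :: w₁) ([] ++ cinv x :: y :: w₁) :=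
        WSwap.mk [] w₁ y (cinv x) (by simpa using hsymm hxy)
      exact h1.trans (by simpa using h2.weq)
    have hiw₁ : Irred adj (y :: w₁) := (hiyw.weq hchain).of_cons
    rw [act_cancel hsymm hirr hiyw hchain hiw₁]
  · -- y cancels, x prepends
    obtain ⟨w₁, hw₁⟩ := hY
    have hi₁ : Irred adj w₁ := (hw.weq hw₁).of_cons
    have hX₁ : ¬ Ldiv adj (cinv x) w₁ := by
      intro h
      exact hX ((ldiv_cons_iff_of_adj hsymm hirr (by simpa using hxy)).2 h
        |> ldiv_of_weq hw₁)
    rw [act_cancel hsymm hirr hw hw₁ hi₁, act_cons hsymm hirr hi₁ hX₁,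
      act_cons hsymm hirr hw hX]
    have hixw : Irred adj (x :: w) := irred_cons hsymm hirr hw hX
    have hchain : WEq adj (x :: w) (cinv y :: x :: w₁) := by
      have h1 : WEq adj (x :: w) (x :: cinv y :: w₁) := hw₁.cons x
      have h2 : WSwap adj ([] ++ x :: cinv y :: w₁) ([] ++ cinv y :: x :: w₁) :=
        WSwap.mk [] w₁ x (cinv y) (by simpa using hxy)
      exact h1.trans (by simpa using h2.weq)
    have hiw₁ : Irred adj (x :: w₁) := (hixw.weq hchain).of_cons
    rw [act_cancel hsymm hirr hixw hchain hiw₁]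
  · -- both prepend
    have hX' : ¬ Ldiv adj (cinv x) (y :: w) := by
      intro h
      exact hX ((ldiv_cons_iff_of_adj hsymm hirr (by simpa using hxy)).1 h)
    have hY' : ¬ Ldiv adj (cinv y) (x :: w) := by
      intro h
      exact hY ((ldiv_cons_iff_of_adj hsymm hirr (by simpa using hsymm hxy)).1 h)
    rw [act_cons hsymm hirr hw hY, act_cons hsymm hirr hw hX,
      act_cons hsymm hirr _ hX', act_cons hsymm hirr _ hY']
    refine qw_sound ?_
    have h : WSwap adj ([] ++ x :: y :: w) ([] ++ y :: x :: w) := WSwap.mk [] w x y hxy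
    simpa using h.weq

omit hsymm hirr

variable (adj) in
/-- Generators of the RAAG attached to signed letters. -/
def gen : Λ × Bool → RaagGroup adj := fun x =>
  if x.2 then PresentedGroup.of x.1 else (PresentedGroup.of x.1)⁻¹

@[simp] lemma gen_true (s : Λ) : gen adj (s, true) = PresentedGroup.of s := rfl

@[simp] lemma gen_false (s : Λ) : gen adj (s, false) = (PresentedGroup.of s)⁻¹ := rfl

variable (adj) in
/-- The product in the RAAG of a signed word. -/
def wProd (w : W Λ) : RaagGroup adj := (w.map (gen adj)).prod

@[simp] lemma wProd_nil : wProd adj ([] : W Λ) = 1 := rfl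

@[simp] lemma wProd_cons (x : Λ × Bool) (w : W Λ) :
    wProd adj (x :: w) = gen adj x * wProd adj w := by
  simp [wProd]

@[simp] lemma wProd_append (u v : W Λ) :
    wProd adj (u ++ v) = wProd adj u * wProd adj v := by
  simp [wProd]

lemma gen_commute {x y : Λ × Bool} (h : adj x.1 y.1) :
    Commute (gen adj x) (gen adj y) := by
  have base : Commute (PresentedGroup.of (rels := RaagRels adj) x.1)
      (PresentedGroup.of y.1) := raag_of_comm adj h
  rcases x with ⟨s, ⟨⟩ | ⟨⟩⟩ <;> rcases y with ⟨t, ⟨⟩ | ⟨⟩⟩ <;>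
    simp only [gen_true, gen_false] <;>
    first
      | exact base
      | exact base.inv_left
      | exact base.inv_right
      | exact base.inv_left.inv_right

lemma wProd_weq {w w' : W Λ} (h : WEq adj w w') : wProd adj w = wProd adj w' := by
  induction h with
  | rel _ _ h =>
    rcases h with ⟨u, v, x, y, hxy⟩
    simp only [wProd_append, wProd_cons]
    rw [← mul_assoc (gen adj x), (gen_commute hxy).eq, mul_assoc]
  | refl => rfl
  | symm _ _ _ ih => exact ih.symm
  | trans _ _ _ _ _ ih₁ ih₂ => exact ih₁.trans ih₂

@[simp] lemma gen_cinv (x : Λ × Bool) : gen adj (cinv x) = (gen adj x)⁻¹ := by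
  rcases x with ⟨s, ⟨⟩ | ⟨⟩⟩
  · exact (inv_inv (gen adj (s, true))).symm
  · rfl

variable (adj) in
/-- The action of the RAAG on reduced traces. -/
noncomputable def phi (hsymm : Symmetric adj) (hirr : ∀ s : Λ, ¬ adj s s) :
    RaagGroup adj →* Equiv.Perm (QW adj) :=
  PresentedGroup.toGroup (f := fun s => actPerm hsymm hirr (s, true)) (by
    rintro r ⟨s, t, hst, rfl⟩
    simp only [map_mul, map_inv, FreeGroup.lift_apply_of]
    have hc : actPerm hsymm hirr (s, true) * actPerm hsymm hirr (t, true) =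
        actPerm hsymm hirr (t, true) * actPerm hsymm hirr (s, true) := by
      refine Equiv.ext (fun q => ?_)
      exact act_comm_of_adj hsymm hirr hst q
    rw [mul_assoc, mul_assoc, ← mul_assoc (actPerm hsymm hirr (s, true))]
    rw [hc]
    group)

include hsymm hirr

lemma phi_gen (x : Λ × Bool) : phi adj hsymm hirr (gen adj x) = actPerm hsymm hirr x := by
  rcases x with ⟨s, ⟨⟩ | ⟨⟩⟩
  · refine (map_inv (phi adj hsymm hirr) (PresentedGroup.of s)).trans ?_
    have h1 : phi adj hsymm hirr (PresentedGroup.of s) = actPerm hsymm hirr (s, true) :=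
      PresentedGroup.toGroup.of _
    erw [h1]
    refine Equiv.ext (fun q => ?_)
    rfl
  · exact PresentedGroup.toGroup.of _

lemma phi_wProd_nil {w : W Λ} (hw : Irred adj w) :
    phi adj hsymm hirr (wProd adj w) ⟦⟨[], irred_nil⟩⟧ = (⟦⟨w, hw⟩⟧ : QW adj) := by
  induction w with
  | nil => simp; rfl
  | cons x w ih =>
    have hiw : Irred adj w := hw.of_cons
    have hld : ¬ Ldiv adj (cinv x) w := hw.not_ldiv
    rw [wProd_cons, map_mul]
    show phi adj hsymm hirr (gen adj x) (phi adj hsymm hirr (wProd adj w) ⟦⟨[], irred_nil⟩⟧) = _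
    rw [ih hiw, phi_gen hsymm hirr]
    show act hsymm hirr x ⟦⟨w, hiw⟩⟧ = _
    rw [act_cons hsymm hirr hiw hld]

/-- MASTER LEMMA: irreducible words with the same image in the RAAG are trace
equivalent. -/
theorem master {u v : W Λ} (hu : Irred adj u) (hv : Irred adj v)
    (h : wProd adj u = wProd adj v) : WEq adj u v := by
  have h1 := phi_wProd_nil hsymm hirr hu
  have h2 := phi_wProd_nil hsymm hirr hv
  rw [h] at h1
  exact qw_exact (h1.symm.trans h2)

omit hsymm hirr

/-- Embedding of positive words. -/
def emb (l : List Λ) : W Λ := l.map (fun s => (s, true))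

/-- The reversed negative word of a positive word. -/
def negrev (l : List Λ) : W Λ := ((emb l).map cinv).reverse

@[simp] lemma emb_nil : emb ([] : List Λ) = [] := rfl

@[simp] lemma emb_cons (s : Λ) (l : List Λ) : emb (s :: l) = (s, true) :: emb l := rfl

@[simp] lemma emb_append (l l' : List Λ) :
    emb (l ++ l') = emb l ++ emb l' := by simp [emb]

lemma emb_snd {z : Λ × Bool} {l : List Λ} (h : z ∈ emb l) : z.2 = true := by
  simp only [emb, List.mem_map] at h
  obtain ⟨s, _, rfl⟩ := h
  rfl

lemma negrev_snd {z : Λ × Bool} {l : List Λ} (h : z ∈ negrev l) : z.2 = false := by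
  simp only [negrev, List.mem_reverse, List.mem_map] at h
  obtain ⟨y, hy, rfl⟩ := h
  simp [emb_snd hy]

lemma emb_of_all_true {w : W Λ} (h : ∀ z ∈ w, z.2 = true) :
    emb (w.map Prod.fst) = w := by
  induction w with
  | nil => rfl
  | cons z w ih =>
    have hz : z.2 = true := h z (List.mem_cons_self)
    have : ((z.1 : Λ), true) = z := by
      rcases z with ⟨s, b⟩
      simp at hz
      simp [hz]
    simp only [List.map_cons, emb_cons, this, ih (fun y hy => h y (List.mem_cons_of_mem _ hy))]

lemma wProd_emb_cons (s : Λ) (l : List Λ) :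
    wProd adj (emb (s :: l)) = gen adj (s, true) * wProd adj (emb l) := by
  rw [emb_cons, wProd_cons]

lemma wProd_negrev (l : List Λ) : wProd adj (negrev l) = (wProd adj (emb l))⁻¹ := by
  induction l with
  | nil => simp [negrev]
  | cons s l ih =>
    have h1 : negrev (s :: l) = negrev l ++ [(s, false)] := by
      simp [negrev, emb, cinv]
    rw [h1, wProd_append, ih]
    rw [wProd_emb_cons, mul_inv_rev, wProd_cons, wProd_nil, mul_one]
    rfl

lemma irred_emb (l : List Λ) : Irred adj (emb l) := by
  rintro ⟨u, x, v, h⟩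
  have hmem : ∀ z ∈ u ++ x :: cinv x :: v, z.2 = true := by
    intro z hz
    exact emb_snd (h.perm.symm.subset hz)
  have h1 : x.2 = true := hmem x (by simp)
  have h2 : (cinv x).2 = true := hmem (cinv x) (by simp)
  rw [cinv_snd, h1] at h2
  exact Bool.false_ne_true (by simpa using h2)

/-- Filtering is compatible with trace equivalence. -/
lemma weq_filter (p : Λ × Bool → Bool) {w w' : W Λ} (h : WEq adj w w') :
    WEq adj (w.filter p) (w'.filter p) := by
  induction h with
  | rel _ _ h =>
    rcases h with ⟨u, v, x, y, hxy⟩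
    rw [List.filter_append, List.filter_append]
    refine WEq.append (WEq.refl _) ?_
    by_cases hx : p x = true <;> by_cases hy : p y = true <;>
      simp only [List.filter_cons, hx, hy, if_pos, if_neg, Bool.false_eq_true,
        ite_true, ite_false]
    · exact (WSwap.mk [] (v.filter p) x y hxy).weq
    · exact WEq.refl _
    · exact WEq.refl _
    · exact WEq.refl _
  | refl => exact WEq.refl _
  | symm _ _ _ ih => exact ih.symm
  | trans _ _ _ _ _ ih₁ ih₂ => exact ih₁.trans ih₂

lemma filter_emb_negrev (b a : List Λ) :
    (emb b ++ negrev a).filter (fun z => z.2) = emb b ∧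
    (emb b ++ negrev a).filter (fun z => !z.2) = negrev a := by
  constructor
  · rw [List.filter_append]
    rw [List.filter_eq_self.2 (fun z hz => by simp [emb_snd hz]),
      List.filter_eq_nil_iff.2 (fun z hz => by simp [negrev_snd hz]),
      List.append_nil]
  · rw [List.filter_append]
    rw [List.filter_eq_nil_iff.2 (fun z hz => by simp [emb_snd hz]),
      List.filter_eq_self.2 (fun z hz => by simp [negrev_snd hz]),
      List.nil_append]

/-- In a word that is a true-block followed by a false-block, no false letter is
immediately followed by a true letter. -/
lemma no_fall_rise {T F : W Λ} (hT : ∀ z ∈ T, z.2 = true) (hF : ∀ z ∈ F, z.2 = false) :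
    ∀ (l : W Λ) {a b : Λ × Bool} (r : W Λ), T ++ F = l ++ a :: b :: r →
      a.2 = false → b.2 = true → False := by
  induction T with
  | nil =>
    intro l a b r heq ha hb
    have : b ∈ F := by
      rw [List.nil_append] at heq
      rw [heq]
      exact List.mem_append.2 (Or.inr (by simp))
    rw [hF b this] at hb
    exact Bool.false_ne_true hb
  | cons c T ih =>
    intro l a b r heq ha hb
    rcases l with _ | ⟨d, l'⟩
    · rw [List.nil_append] at heq
      have hc : c = a := by injection heq
      have := hT c (by simp)
      rw [hc] at this
      rw [this] at ha
      simp at ha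
    · have h1 : c = d ∧ T ++ F = l' ++ a :: b :: r := by
        constructor
        · injection heq
        · injection heq
      exact ih (fun z hz => hT z (List.mem_cons_of_mem _ hz)) l' r h1.2 ha hb

include hsymm hirr

lemma x_true_of_blocks {p n u v : W Λ} {x : Λ × Bool}
    (hp : ∀ z ∈ p, z.2 = true) (hn : ∀ z ∈ n, z.2 = false)
    (h : WEq adj (p ++ n) (u ++ x :: cinv x :: v)) : x.2 = true := by
  by_contra hx
  have hx' : x.2 = false := by
    cases hb : x.2
    · rfl
    · exact absurd hb hx
  have hpair : ¬ adj (x.1, true).1 (x.1, false).1 := hirr x.1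
  have hprj := h.prj_eq hsymm hirr hpair
  rw [prj_append, prj_append] at hprj
  have hxq : x = (x.1, true) ∨ x = (x.1, false) := by
    right
    exact Prod.ext rfl hx'
  have hcxq : cinv x = (x.1, true) ∨ cinv x = (x.1, false) := by
    left
    refine Prod.ext rfl ?_
    simp [hx']
  rw [prj_cons_pos hxq, prj_cons_pos hcxq] at hprj
  refine no_fall_rise (T := prj (x.1, true) (x.1, false) p)
    (F := prj (x.1, true) (x.1, false) n) ?_ ?_
    (prj (x.1, true) (x.1, false) u) (prj (x.1, true) (x.1, false) v) hprj hx' (by simp [hx'])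
  · intro z hz
    exact hp z (mem_prj.1 hz).1
  · intro z hz
    exact hn z (mem_prj.1 hz).1

lemma junction_half (b : Bool) {p n u v : W Λ} {x : Λ × Bool}
    (hp : ∀ z ∈ p, z.2 = b) (hn : ∀ z ∈ n, z.2 = !b) (hx : x.2 = b)
    (h : WEq adj (p ++ n) (u ++ x :: cinv x :: v)) :
    ∃ p', WEq adj p (p' ++ [x]) := by
  obtain ⟨z₁, z₂, z₃, z₄, Hp, Hn, _, Hw, _⟩ := levi hsymm hirr u h
  have hz₂ : ∀ z ∈ z₂, z.2 = b := fun z hz =>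
    hp z (Hp.perm.symm.subset (List.mem_append.2 (Or.inr hz)))
  have hz₄ : ∀ z ∈ z₄, z.2 = !b := fun z hz =>
    hn z (Hn.perm.symm.subset (List.mem_append.2 (Or.inr hz)))
  have hld : Ldiv adj x (z₂ ++ z₄) := ⟨cinv x :: v, Hw.symm⟩
  rcases ldiv_append hsymm hirr hld with ⟨z₂', hz₂'⟩ | ⟨⟨t, ht⟩, _⟩
  swap
  · exfalso
    have : x ∈ z₄ := ht.perm.symm.subset (List.mem_cons_self)
    have := hz₄ x this
    rw [hx] at this
    exact ((Bool.eq_not_self b).1 this).elim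
  have hcan : WEq adj (cinv x :: v) (z₂' ++ z₄) := by
    refine weq_cons_cancel hsymm hirr (x := x) ?_
    exact Hw.trans ((hz₂'.append_right z₄).trans (WEq.refl _))
  have hld2 : Ldiv adj (cinv x) (z₂' ++ z₄) := ⟨v, hcan.symm⟩
  rcases ldiv_append hsymm hirr hld2 with ⟨t, ht⟩ | ⟨_, hcomm⟩
  · exfalso
    have hmem : cinv x ∈ z₂' := ht.perm.symm.subset (List.mem_cons_self)
    have hmem2 : cinv x ∈ z₂ := hz₂'.perm.symm.subset (List.mem_cons_of_mem _ hmem)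
    have := hz₂ _ hmem2
    rw [cinv_snd, hx] at this
    exact ((Bool.eq_not_self b).1 this.symm).elim
  · have hc' : ∀ bb ∈ z₂', adj x.1 bb.1 := by
      intro bb hbb
      simpa using hcomm bb hbb
    have hfront : WEq adj (z₂' ++ [x]) (x :: z₂') := by
      have := weq_front hsymm (u := z₂') (x := x) hc' []
      simpa using this
    refine ⟨z₁ ++ z₂', ?_⟩
    have h1 : WEq adj p (z₁ ++ (z₂' ++ [x])) :=
      Hp.trans ((hz₂'.trans hfront.symm).append_left z₁)
    simpa [List.append_assoc] using h1

lemma junction {p n u v : W Λ} {x : Λ × Bool}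
    (hp : ∀ z ∈ p, z.2 = true) (hn : ∀ z ∈ n, z.2 = false)
    (h : WEq adj (p ++ n) (u ++ x :: cinv x :: v)) :
    ∃ p' n', WEq adj p (p' ++ [(x.1, true)]) ∧ WEq adj n ((x.1, false) :: n') := by
  have hxt : x.2 = true := x_true_of_blocks hsymm hirr hp hn h
  have hxx : x = (x.1, true) := Prod.ext rfl hxt
  have hcx : cinv x = (x.1, false) := by
    refine Prod.ext rfl ?_
    simp [hxt]
  obtain ⟨p', hp'⟩ := junction_half hsymm hirr true hp hn hxt h
  have hrev : WEq adj (n.reverse ++ p.reverse)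
      (v.reverse ++ cinv x :: cinv (cinv x) :: u.reverse) := by
    have := h.reverse hsymm
    rw [cinv_cinv]
    simpa [List.reverse_append, List.append_assoc] using this
  obtain ⟨n'', hn''⟩ := junction_half hsymm hirr false
    (fun z hz => hn z (List.mem_reverse.1 hz))
    (fun z hz => by simpa using hp z (List.mem_reverse.1 hz))
    (by simp [hxt]) hrev
  refine ⟨p', n''.reverse, by rwa [hxx] at hp', ?_⟩
  have h2 := hn''.reverse hsymm
  rw [List.reverse_reverse] at h2
  rw [← hcx]
  simpa using h2

omit hsymm hirr

variable (adj) in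
/-- Reduced pairs of positive words: no common right divisor. -/
def PairIrred (b a : List Λ) : Prop :=
  ¬ ∃ (s : Λ) (b' a' : List Λ),
      WEq adj (emb b) (emb b' ++ [(s, true)]) ∧ WEq adj (emb a) (emb a' ++ [(s, true)])

include hsymm hirr

lemma irred_blocks {b a : List Λ} (h : PairIrred adj b a) :
    Irred adj (emb b ++ negrev a) := by
  rintro ⟨u, x, v, hw⟩
  obtain ⟨p', n', h1, h2⟩ := junction hsymm hirr
    (fun z hz => emb_snd hz) (fun z hz => negrev_snd hz) hw
  have hp' : ∀ z ∈ p', z.2 = true := by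
    intro z hz
    exact emb_snd (h1.perm.symm.subset (List.mem_append.2 (Or.inl hz)))
  -- transform the `negrev` side
  have h3 : WEq adj ((negrev a).map cinv) ((x.1, true) :: n'.map cinv) := by
    have := h2.mapFlip
    simpa [cinv] using this
  have h4 : (negrev a).map cinv = (emb a).reverse := by
    simp [negrev, List.map_reverse, List.map_map, Function.comp_def]
  rw [h4] at h3
  have h5 : WEq adj (emb a) ((n'.map cinv).reverse ++ [(x.1, true)]) := by
    have := h3.reverse hsymm
    simpa using this
  have hn' : ∀ z ∈ (n'.map cinv).reverse, z.2 = true := by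
    intro z hz
    have : z ∈ (emb a) := h5.perm.symm.subset (List.mem_append.2 (Or.inl hz))
    exact emb_snd this
  refine h ⟨x.1, p'.map Prod.fst, ((n'.map cinv).reverse).map Prod.fst, ?_, ?_⟩
  · rwa [emb_of_all_true hp']
  · rwa [emb_of_all_true hn']

omit hsymm hirr

@[simp] lemma emb_length (l : List Λ) : (emb l : W Λ).length = l.length := by
  simp [emb]

variable (adj) in
/-- The positive cone of the RAAG. -/
def posCone : Submonoid (RaagGroup adj) :=
  Submonoid.closure (Set.range fun s : Λ => (PresentedGroup.of s : RaagGroup adj))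

lemma mem_posCone_iff {g : RaagGroup adj} :
    g ∈ posCone adj ↔ ∃ l : List Λ, g = wProd adj (emb l) := by
  constructor
  · intro hg
    induction hg using Submonoid.closure_induction with
    | mem x hx =>
      obtain ⟨s, rfl⟩ := hx
      exact ⟨[s], by simp; exact (mul_one _).symm⟩
    | one => exact ⟨[], by simp⟩
    | mul x y _ _ ihx ihy =>
      obtain ⟨l, rfl⟩ := ihx
      obtain ⟨l', rfl⟩ := ihy
      exact ⟨l ++ l', by simp⟩
  · rintro ⟨l, rfl⟩
    induction l with
    | nil => simpa using Submonoid.one_mem (posCone adj)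
    | cons s l ih =>
      rw [emb_cons, wProd_cons]
      exact Submonoid.mul_mem _ (Submonoid.subset_closure ⟨s, rfl⟩) ih

lemma pairIrred_nil_right (b : List Λ) : PairIrred adj b [] := by
  rintro ⟨s, b', a', _, h2⟩
  have := h2.perm.length_eq
  simp at this

lemma pair_reduce : ∀ (n : ℕ) (b a : List Λ), a.length ≤ n →
    ∃ b₀ a₀ c : List Λ, PairIrred adj b₀ a₀ ∧
      WEq adj (emb b) (emb b₀ ++ emb c) ∧ WEq adj (emb a) (emb a₀ ++ emb c) := by
  intro n
  induction n with
  | zero =>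
    intro b a ha
    have : a = [] := List.length_eq_zero_iff.1 (Nat.le_zero.1 ha)
    subst this
    exact ⟨b, [], [], pairIrred_nil_right b, by simpa using WEq.refl _, WEq.refl _⟩
  | succ n ih =>
    intro b a ha
    by_cases h : PairIrred adj b a
    · exact ⟨b, a, [], h, by simpa using WEq.refl _, by simpa using WEq.refl _⟩
    · obtain ⟨s, b', a', h1, h2⟩ := not_not.1 h
      have hlen : a'.length ≤ n := by
        have := h2.perm.length_eq
        simp at this
        omega
      obtain ⟨b₀, a₀, c, hI, hB, hA⟩ := ih b' a' hlen
      refine ⟨b₀, a₀, c ++ [s], hI, ?_, ?_⟩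
      · have : WEq adj (emb b) ((emb b₀ ++ emb c) ++ [(s, true)]) :=
          h1.trans (hB.append_right _)
        simpa [List.append_assoc] using this
      · have : WEq adj (emb a) ((emb a₀ ++ emb c) ++ [(s, true)]) :=
          h2.trans (hA.append_right _)
        simpa [List.append_assoc] using this

include hsymm hirr

lemma pair_unique {b a b' a' : List Λ} (hI : PairIrred adj b a) (hI' : PairIrred adj b' a')
    (h : wProd adj (emb b) * (wProd adj (emb a))⁻¹ =
      wProd adj (emb b') * (wProd adj (emb a'))⁻¹) :
    WEq adj (emb b) (emb b') := by
  have hw : wProd adj (emb b ++ negrev a) = wProd adj (emb b' ++ negrev a') := by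
    rw [wProd_append, wProd_append, wProd_negrev, wProd_negrev]
    exact h
  have hweq := master hsymm hirr (irred_blocks hsymm hirr hI) (irred_blocks hsymm hirr hI') hw
  have := weq_filter (fun z => z.2) hweq
  rwa [(filter_emb_negrev b a).1, (filter_emb_negrev b' a').1] at this

/-- Core of the quasi-lattice property: least upper bounds of `1` and `g`. -/
lemma lub_one {g : RaagGroup adj} (hub : ∃ p, p ∈ posCone adj ∧ g⁻¹ * p ∈ posCone adj) :
    ∃ m, m ∈ posCone adj ∧ g⁻¹ * m ∈ posCone adj ∧
      ∀ w, w ∈ posCone adj → g⁻¹ * w ∈ posCone adj → m⁻¹ * w ∈ posCone adj := by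
  obtain ⟨p, hp, hq⟩ := hub
  obtain ⟨b', hb'⟩ := mem_posCone_iff.1 hp
  obtain ⟨a', ha'⟩ := mem_posCone_iff.1 hq
  have hg : g = wProd adj (emb b') * (wProd adj (emb a'))⁻¹ := by
    rw [← hb', ← ha']
    group
  obtain ⟨b₀, a₀, c, hI, hB, hA⟩ := pair_reduce a'.length b' a' le_rfl
  have hgval : g = wProd adj (emb b₀) * (wProd adj (emb a₀))⁻¹ := by
    rw [hg, wProd_weq hB, wProd_weq hA, wProd_append, wProd_append]
    group
  refine ⟨wProd adj (emb b₀), mem_posCone_iff.2 ⟨b₀, rfl⟩, ?_, ?_⟩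
  · have : g⁻¹ * wProd adj (emb b₀) = wProd adj (emb a₀) := by
      rw [hgval]
      group
    rw [this]
    exact mem_posCone_iff.2 ⟨a₀, rfl⟩
  · intro w hw hgw
    obtain ⟨b₁, hb₁⟩ := mem_posCone_iff.1 hw
    obtain ⟨a₁, ha₁⟩ := mem_posCone_iff.1 hgw
    have hg1 : g = wProd adj (emb b₁) * (wProd adj (emb a₁))⁻¹ := by
      rw [← hb₁, ← ha₁]
      group
    obtain ⟨b₂, a₂, c₂, hI₂, hB₂, hA₂⟩ := pair_reduce a₁.length b₁ a₁ le_rfl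
    have hg2 : g = wProd adj (emb b₂) * (wProd adj (emb a₂))⁻¹ := by
      rw [hg1, wProd_weq hB₂, wProd_weq hA₂, wProd_append, wProd_append]
      group
    have hbb : WEq adj (emb b₂) (emb b₀) :=
      pair_unique hsymm hirr hI₂ hI (hg2.symm.trans hgval)
    have hkey : (wProd adj (emb b₀))⁻¹ * w = wProd adj (emb c₂) := by
      rw [hb₁, wProd_weq hB₂, wProd_append, wProd_weq hbb]
      group
    rw [hkey]
    exact mem_posCone_iff.2 ⟨c₂, rfl⟩

omit hsymm hirr

variable (adj) in
/-- The defining relation of the RAAG monoid. -/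
def mrel : FreeMonoid Λ → FreeMonoid Λ → Prop := fun m n => ∃ s t : Λ, adj s t ∧
  m = FreeMonoid.of s * FreeMonoid.of t ∧ n = FreeMonoid.of t * FreeMonoid.of s

@[simp] lemma map_fst_emb (l : List Λ) : (emb l : W Λ).map Prod.fst = l := by
  induction l with
  | nil => rfl
  | cons s l ih => simpa [emb] using ih

lemma weq_to_con {w w' : W Λ} (h : WEq adj w w') :
    (∀ z ∈ w, z.2 = true) →
      ConGen.Rel (mrel adj) (FreeMonoid.ofList (w.map Prod.fst))
        (FreeMonoid.ofList (w'.map Prod.fst)) := by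
  induction h with
  | rel a b hab =>
    intro _
    rcases hab with ⟨u, v, x, y, hxy⟩
    have key : ConGen.Rel (mrel adj)
        (FreeMonoid.ofList (u.map Prod.fst) *
          ((FreeMonoid.of x.1 * FreeMonoid.of y.1) * FreeMonoid.ofList (v.map Prod.fst)))
        (FreeMonoid.ofList (u.map Prod.fst) *
          ((FreeMonoid.of y.1 * FreeMonoid.of x.1) * FreeMonoid.ofList (v.map Prod.fst))) :=
      ConGen.Rel.mul (ConGen.Rel.refl _)
        (ConGen.Rel.mul (ConGen.Rel.of _ _ ⟨x.1, y.1, hxy, rfl, rfl⟩) (ConGen.Rel.refl _))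
    simpa [FreeMonoid.ofList_append, FreeMonoid.ofList_cons, mul_assoc] using key
  | refl a => exact fun _ => ConGen.Rel.refl _
  | symm a b hab ih =>
    intro hb
    have hall : ∀ z ∈ a, z.2 = true :=
      fun z hz => hb z ((WEq.perm (adj := adj) hab).subset hz)
    exact (ih hall).symm
  | trans a b c hab hbc ih₁ ih₂ =>
    intro ha
    have hball : ∀ z ∈ b, z.2 = true :=
      fun z hz => ha z ((WEq.perm (adj := adj) hab).symm.subset hz)
    exact (ih₁ ha).trans (ih₂ hball)

variable (adj) in
/-- The canonical map to the RAAG monoid. -/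
def rmk (u : FreeMonoid Λ) : RaagMonoid adj :=
  ((u : (conGen fun m n : FreeMonoid Λ => ∃ s t : Λ, adj s t ∧
    m = FreeMonoid.of s * FreeMonoid.of t ∧
      n = FreeMonoid.of t * FreeMonoid.of s).Quotient) : RaagMonoid adj)

lemma lift_ofList (l : List Λ) :
    FreeMonoid.lift (fun s : Λ => (PresentedGroup.of s : RaagGroup adj))
      (FreeMonoid.ofList l) = wProd adj (emb l) := by
  induction l with
  | nil => simp [show FreeMonoid.ofList ([] : List Λ) = 1 from rfl]; rfl
  | cons s l ih =>
    rw [FreeMonoid.ofList_cons, map_mul, FreeMonoid.lift_eval_of, emb_cons, wProd_cons,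
      ih, gen_true]
    rfl

end RaagAux

open RaagAux in
/-- For a right-angled Coxeter matrix (encoded by the simplicial graph
`adj`), the canonical monoid homomorphism identifies the Artin monoid `A_M^+` with the
positive cone of the right-angled Artin group `A_M` (the submonoid generated by the
generators), and `(A_M, A_M^+)` is a quasi-lattice ordered group. -/
theorem raag_monoid_embeds_and_qlo (adj : Λ → Λ → Prop)
    (hsymm : Symmetric adj) (hirr : ∀ s : Λ, ¬ adj s s) :
    Function.Injective (raagCanonical adj) ∧
    MonoidHom.mrange (raagCanonical adj) =
      Submonoid.closure (Set.range fun s : Λ => (PresentedGroup.of s : RaagGroup adj)) ∧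
    IsQLO (Submonoid.closure
      (Set.range fun s : Λ => (PresentedGroup.of s : RaagGroup adj))) := by
  classical
  show Function.Injective (raagCanonical adj) ∧
    MonoidHom.mrange (raagCanonical adj) = (posCone adj : Submonoid (RaagGroup adj)) ∧
    IsQLO (H := RaagGroup adj) (posCone adj)
  have hcan : ∀ u : FreeMonoid Λ,
      raagCanonical adj (rmk adj u) =
        FreeMonoid.lift (fun s : Λ => (PresentedGroup.of s : RaagGroup adj)) u :=
    fun u => rfl
  have hlift : ∀ u : FreeMonoid Λ,
      FreeMonoid.lift (fun s : Λ => (PresentedGroup.of s : RaagGroup adj)) u =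
        wProd adj (emb (FreeMonoid.toList u)) := by
    intro u
    have h1 := lift_ofList (adj := adj) (FreeMonoid.toList u)
    rwa [FreeMonoid.ofList_toList] at h1
  have hsurj : ∀ x : RaagMonoid adj, ∃ u : FreeMonoid Λ, rmk adj u = x :=
    fun x => Quot.exists_rep x
  refine ⟨?_, ?_, ?_, ?_⟩
  · -- injectivity
    intro x y hxy
    obtain ⟨u, rfl⟩ := hsurj x
    obtain ⟨v, rfl⟩ := hsurj y
    rw [hcan, hcan, hlift, hlift] at hxy
    have hweq := master hsymm hirr (irred_emb _) (irred_emb _) hxy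
    have hrel := weq_to_con (adj := adj) hweq (fun z hz => emb_snd hz)
    rw [map_fst_emb, map_fst_emb, FreeMonoid.ofList_toList, FreeMonoid.ofList_toList] at hrel
    exact (Con.eq _).2 hrel
  · -- range equals positive cone
    ext g
    constructor
    · rintro ⟨x, rfl⟩
      obtain ⟨u, rfl⟩ := hsurj x
      rw [hcan, hlift]
      exact mem_posCone_iff.2 ⟨FreeMonoid.toList u, rfl⟩
    · intro hg
      obtain ⟨l, rfl⟩ := mem_posCone_iff.1 hg
      refine ⟨rmk adj (FreeMonoid.ofList l), ?_⟩
      rw [hcan, lift_ofList]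
  · -- partially ordered
    intro g hg hginv
    obtain ⟨l, rfl⟩ := mem_posCone_iff.1 hg
    obtain ⟨l', hl'⟩ := mem_posCone_iff.1 hginv
    have h1 : wProd adj (emb (l ++ l')) = wProd adj (emb ([] : List Λ)) := by
      rw [emb_append, wProd_append, ← hl']
      simp
    have hweq := master hsymm hirr (irred_emb _) (irred_emb _) h1
    have hlen := hweq.perm.length_eq
    simp only [emb_length, List.length_append, emb_nil, List.length_nil] at hlen
    have : l = [] := List.length_eq_zero_iff.1 (by omega)
    rw [this]
    simp
  · -- least upper bounds
    rintro x y ⟨z, hx, hy⟩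
    have hub : ∃ p, p ∈ posCone adj ∧ (x⁻¹ * y)⁻¹ * p ∈ posCone adj := by
      refine ⟨x⁻¹ * z, hx, ?_⟩
      have h0 : (x⁻¹ * y)⁻¹ * (x⁻¹ * z) = y⁻¹ * z := by group
      rw [h0]
      exact hy
    obtain ⟨m₀, h1, h2, h3⟩ := lub_one hsymm hirr hub
    refine ⟨x * m₀, ?_, ?_, ?_⟩
    · show x⁻¹ * (x * m₀) ∈ _
      rw [inv_mul_cancel_left]
      exact h1
    · show y⁻¹ * (x * m₀) ∈ _
      have h0 : y⁻¹ * (x * m₀) = (x⁻¹ * y)⁻¹ * m₀ := by group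
      rw [h0]
      exact h2
    · intro w hw1 hw2
      have hw2' : (x⁻¹ * y)⁻¹ * (x⁻¹ * w) ∈ posCone adj := by
        have h0 : (x⁻¹ * y)⁻¹ * (x⁻¹ * w) = y⁻¹ * w := by group
        rw [h0]
        exact hw2
      have hfin := h3 (x⁻¹ * w) hw1 hw2'
      show (x * m₀)⁻¹ * w ∈ _
      have h0 : (x * m₀)⁻¹ * w = m₀⁻¹ * (x⁻¹ * w) := by group
      rw [h0]
      exact hfin
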